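/- Every probability distribution D on [−1,1] satisfying the 2-sample median constraint has E[D] ≤ √2 − 1; that is, θ_2 ≤ √2 − 1. -/

import Mathlib

open MeasureTheory

/-- A probability distribution `μ` on `[-1,1]` satisfies the `k`-sample median constraint if
for `k` i.i.d. samples `Y_1, …, Y_k ~ μ`, `Pr[Y_1 + ⋯ + Y_k ≤ 0] ≥ 1/2`. -/
def MedianConstraint (k : ℕ) (μ : Measure ℝ) : Prop :=
  (1 : ENNReal) / 2 ≤ Measure.pi (fun _ : Fin k => μ) {y | ∑ i, y i ≤ 0}

lemma alg_aux (p q : ℝ) (hp : 0 ≤ p) (hq : 0 ≤ q) (hpq : p + q ≤ 1)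
    (h : p * (1 - q) + (1 - q) * p ≤ 1 / 2 + p * p) :
    p - q ≤ Real.sqrt 2 - 1 := by
  have hs : Real.sqrt 2 ^ 2 = 2 := Real.sq_sqrt (by norm_num)
  have hs1 : 1 ≤ Real.sqrt 2 := by nlinarith [Real.sqrt_nonneg 2]
  set s := Real.sqrt 2
  rcases le_or_gt p (s/6) with h1 | h1
  · nlinarith
  rcases le_or_gt (s/2) p with h2 | h2
  · nlinarith
  · nlinarith [mul_nonneg hp hq, sq_nonneg (p - s/2), sq_nonneg (p - s/6)]

lemma pi_two_set (s₀ s₁ : Set ℝ) :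
    (Set.pi Set.univ ![s₀, s₁]) = {y : Fin 2 → ℝ | y 0 ∈ s₀ ∧ y 1 ∈ s₁} := by
  ext y
  simp [Set.mem_pi, Fin.forall_fin_two]

lemma prob_ineq_aux (μ : Measure ℝ) [IsProbabilityMeasure μ]
    (hmed : MedianConstraint 2 μ) {t : ℝ} (ht : 0 < t) :
    μ (Set.Ici t) * μ (Set.Ioi (-t)) + μ (Set.Ioi (-t)) * μ (Set.Ici t)
      ≤ 1 / 2 + μ (Set.Ici t) * μ (Set.Ici t) := by
  set π := Measure.pi (fun _ : Fin 2 => μ) with hπ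
  have : IsProbabilityMeasure π := by infer_instance
  have hmble : MeasurableSet {y : Fin 2 → ℝ | ∑ i, y i ≤ 0} := by
    apply measurableSet_le (Finset.measurable_sum _ fun i _ => measurable_pi_apply i)
      measurable_const
  have hScompl : π {y : Fin 2 → ℝ | ∑ i, y i ≤ 0}ᶜ ≤ 1 / 2 := by
    rw [prob_compl_eq_one_sub hmble]
    calc 1 - π {y : Fin 2 → ℝ | ∑ i, y i ≤ 0} ≤ 1 - 1/2 := by
          exact tsub_le_tsub le_rfl hmed
      _ = 1/2 := by norm_num
  set s : Set ℝ := Set.Ici t with hsdef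
  set r : Set ℝ := Set.Ioi (-t) with hrdef
  have hsm : MeasurableSet s := measurableSet_Ici
  have hrm : MeasurableSet r := measurableSet_Ioi
  set A : Set (Fin 2 → ℝ) := Set.pi Set.univ ![s, r]
  set B : Set (Fin 2 → ℝ) := Set.pi Set.univ ![r, s]
  have hBm : MeasurableSet B :=
    MeasurableSet.univ_pi (fun i => by fin_cases i <;> simpa)
  have hsub : A ∪ B ⊆ {y : Fin 2 → ℝ | ∑ i, y i ≤ 0}ᶜ := by
    rintro y (hy | hy) <;>
    · simp only [A, B, pi_two_set, Set.mem_setOf_eq, hsdef, hrdef,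
        Set.mem_Ici, Set.mem_Ioi] at hy
      simp only [Set.mem_compl_iff, Set.mem_setOf_eq, Fin.sum_univ_two, not_le]
      linarith [hy.1, hy.2]
  have hinter : A ∩ B = Set.pi Set.univ ![s, s] := by
    simp only [A, B, pi_two_set]
    ext y
    simp only [Set.mem_inter_iff, Set.mem_setOf_eq, hsdef, hrdef,
      Set.mem_Ici, Set.mem_Ioi]
    constructor
    · rintro ⟨⟨h1, h2⟩, h3, h4⟩; exact ⟨h1, h4⟩
    · rintro ⟨h1, h2⟩; exact ⟨⟨h1, by linarith⟩, ⟨by linarith, h2⟩⟩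
  have key : π A + π B = π (A ∪ B) + π (A ∩ B) :=
    (measure_union_add_inter A hBm).symm
  have hπA : π A = μ s * μ r := by
    rw [hπ, Measure.pi_pi]; simp [Fin.prod_univ_two]
  have hπB : π B = μ r * μ s := by
    rw [hπ, Measure.pi_pi]; simp [Fin.prod_univ_two]
  have hπAB : π (A ∩ B) = μ s * μ s := by
    rw [hinter, hπ, Measure.pi_pi]; simp [Fin.prod_univ_two]
  calc μ s * μ r + μ r * μ s = π (A ∪ B) + π (A ∩ B) := by rw [← key, hπA, hπB]
    _ ≤ 1/2 + μ s * μ s := by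
        rw [hπAB]
        exact add_le_add ((measure_mono hsub).trans hScompl) le_rfl

lemma pointwise_aux (μ : Measure ℝ) [IsProbabilityMeasure μ]
    (hmed : MedianConstraint 2 μ) {t : ℝ} (ht : 0 < t) :
    (μ (Set.Ici t)).toReal - (μ (Set.Iic (-t))).toReal ≤ Real.sqrt 2 - 1 := by
  set P := μ (Set.Ici t) with hP
  set Q := μ (Set.Iic (-t)) with hQ
  set R := μ (Set.Ioi (-t)) with hRdef
  have hPt : P ≠ ⊤ := measure_ne_top μ _
  have hQt : Q ≠ ⊤ := measure_ne_top μ _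
  have hRt : R ≠ ⊤ := measure_ne_top μ _
  have hQ1 : Q ≤ 1 := prob_le_one
  have hR : R = 1 - Q := by
    have hset : Set.Ioi (-t) = (Set.Iic (-t))ᶜ := by
      ext a; simp [not_le]
    rw [hRdef, hset, prob_compl_eq_one_sub measurableSet_Iic]
  have hRreal : R.toReal = 1 - Q.toReal := by
    rw [hR, ENNReal.toReal_sub_of_le hQ1 (by norm_num)]
    simp
  have hdisj : Disjoint (Set.Ici t) (Set.Iic (-t)) := by
    rw [Set.disjoint_left]
    intro a ha ha'
    simp only [Set.mem_Ici] at ha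
    simp only [Set.mem_Iic] at ha'
    linarith
  have hPQ : P + Q ≤ 1 := by
    calc P + Q = μ (Set.Ici t ∪ Set.Iic (-t)) :=
        (measure_union hdisj measurableSet_Iic).symm
      _ ≤ 1 := prob_le_one
  have hPQreal : P.toReal + Q.toReal ≤ 1 := by
    rw [← ENNReal.toReal_add hPt hQt]
    calc (P + Q).toReal ≤ (1 : ENNReal).toReal :=
        ENNReal.toReal_mono (by norm_num) hPQ
      _ = 1 := by simp
  have hmain := prob_ineq_aux μ hmed ht
  rw [← hP, ← hRdef] at hmain
  have hmainReal : P.toReal * R.toReal + R.toReal * P.toReal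
      ≤ 1/2 + P.toReal * P.toReal := by
    have hPRt : P * R ≠ ⊤ := ENNReal.mul_ne_top hPt hRt
    have hRPt : R * P ≠ ⊤ := ENNReal.mul_ne_top hRt hPt
    have hhalf : (1:ENNReal)/2 ≠ ⊤ := by
      simp [ENNReal.div_eq_top]
    have hPPt : P * P ≠ ⊤ := ENNReal.mul_ne_top hPt hPt
    have h1 : (P * R + R * P).toReal ≤ ((1:ENNReal)/2 + P * P).toReal :=
      ENNReal.toReal_mono (ENNReal.add_ne_top.mpr ⟨hhalf, hPPt⟩) hmain
    rw [ENNReal.toReal_add hPRt hRPt, ENNReal.toReal_add hhalf hPPt,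
        ENNReal.toReal_mul, ENNReal.toReal_mul, ENNReal.toReal_mul] at h1
    simpa using h1
  rw [hRreal] at hmainReal
  exact alg_aux P.toReal Q.toReal ENNReal.toReal_nonneg ENNReal.toReal_nonneg
    hPQreal hmainReal

/-- Every probability distribution on `[-1,1]` satisfying the 2-sample median
constraint has expectation at most `√2 - 1`; that is, `θ_2 ≤ √2 - 1`. -/
theorem stmt9 (μ : Measure ℝ) [IsProbabilityMeasure μ]
    (hsupp : μ (Set.Icc (-1 : ℝ) 1)ᶜ = 0)
    (hmed : MedianConstraint 2 μ) :
    ∫ x, x ∂μ ≤ Real.sqrt 2 - 1 := by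
  have hae : ∀ᵐ x ∂μ, x ∈ Set.Icc (-1 : ℝ) 1 := by
    rw [ae_iff]
    simpa [Set.compl_def] using hsupp
  -- integrability of positive and negative parts
  have hmeasP : Measurable fun x : ℝ => max x 0 := measurable_id.max measurable_const
  have hmeasM : Measurable fun x : ℝ => max (-x) 0 := measurable_neg.max measurable_const
  have hintP : Integrable (fun x => max x 0) μ := by
    apply (integrable_const (1 : ℝ)).mono' hmeasP.aestronglyMeasurable
    filter_upwards [hae] with x hx
    rw [Real.norm_eq_abs, abs_of_nonneg (le_max_right _ _)]
    exact max_le hx.2 (by norm_num)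
  have hintM : Integrable (fun x => max (-x) 0) μ := by
    apply (integrable_const (1 : ℝ)).mono' hmeasM.aestronglyMeasurable
    filter_upwards [hae] with x hx
    rw [Real.norm_eq_abs, abs_of_nonneg (le_max_right _ _)]
    exact max_le (by linarith [hx.1] : -x ≤ (1:ℝ)) (by norm_num)
  -- layer cake
  have hlcP : ∫ x, max x 0 ∂μ
      = ∫ t in Set.Ioc (0:ℝ) 1, (μ (Set.Ici t)).toReal := by
    rw [hintP.integral_eq_integral_Ioc_meas_le (M := 1)
      (ae_of_all _ fun x => le_max_right x 0)
      (by filter_upwards [hae] with x hx; exact max_le hx.2 (by norm_num))]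
    apply setIntegral_congr_fun measurableSet_Ioc
    intro t ht
    have hset : {a : ℝ | t ≤ max a 0} = Set.Ici t := by
      ext a
      simp [le_max_iff, Set.mem_Ici, (not_le.mpr ht.1 : ¬ t ≤ 0)]
    exact congrArg (fun S => (μ S).toReal) hset
  have hlcM : ∫ x, max (-x) 0 ∂μ
      = ∫ t in Set.Ioc (0:ℝ) 1, (μ (Set.Iic (-t))).toReal := by
    rw [hintM.integral_eq_integral_Ioc_meas_le (M := 1)
      (ae_of_all _ fun x => le_max_right (-x) 0)
      (by filter_upwards [hae] with x hx; exact max_le (by linarith [hx.1] : -x ≤ (1:ℝ)) (by norm_num))]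
    apply setIntegral_congr_fun measurableSet_Ioc
    intro t ht
    have hset : {a : ℝ | t ≤ max (-a) 0} = Set.Iic (-t) := by
      ext a
      simp only [Set.mem_setOf_eq, le_max_iff, (not_le.mpr ht.1 : ¬ t ≤ 0), or_false,
        Set.mem_Iic]
      constructor
      · intro h; linarith
      · intro h; linarith
    exact congrArg (fun S => (μ S).toReal) hset
  -- integrability of the tail functions
  have hub : ∀ s : Set ℝ, (μ s).toReal ≤ 1 := by
    intro s
    calc (μ s).toReal ≤ (1 : ENNReal).toReal :=
        ENNReal.toReal_mono (by norm_num) prob_le_one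
      _ = 1 := by simp
  have hip : IntegrableOn (fun t : ℝ => (μ (Set.Ici t)).toReal) (Set.Ioc 0 1) := by
    have hanti : Antitone fun t : ℝ => (μ (Set.Ici t)).toReal := by
      intro s t hst
      exact ENNReal.toReal_mono (measure_ne_top μ _)
        (measure_mono fun a ha => hst.trans ha)
    apply (integrable_const (1 : ℝ)).mono' hanti.measurable.aestronglyMeasurable
    refine ae_of_all _ fun t => ?_
    rw [Real.norm_eq_abs, abs_of_nonneg ENNReal.toReal_nonneg]
    exact hub _
  have hiq : IntegrableOn (fun t : ℝ => (μ (Set.Iic (-t))).toReal) (Set.Ioc 0 1) := by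
    have hanti : Antitone fun t : ℝ => (μ (Set.Iic (-t))).toReal := by
      intro s t hst
      exact ENNReal.toReal_mono (measure_ne_top μ _)
        (measure_mono fun a ha => le_trans ha (neg_le_neg hst))
    apply (integrable_const (1 : ℝ)).mono' hanti.measurable.aestronglyMeasurable
    refine ae_of_all _ fun t => ?_
    rw [Real.norm_eq_abs, abs_of_nonneg ENNReal.toReal_nonneg]
    exact hub _
  -- put it together
  have hid : ∫ x, x ∂μ = ∫ x, max x 0 ∂μ - ∫ x, max (-x) 0 ∂μ := by
    rw [← integral_sub hintP hintM]
    apply integral_congr_ae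
    refine ae_of_all _ fun x => ?_
    show x = max x 0 - max (-x) 0
    rcases le_total x 0 with h | h
    · rw [max_eq_right h, max_eq_left (by linarith)]; ring
    · rw [max_eq_left h, max_eq_right (by linarith)]; ring
  rw [hid, hlcP, hlcM, ← integral_sub hip hiq]
  calc ∫ t in Set.Ioc (0:ℝ) 1, ((μ (Set.Ici t)).toReal - (μ (Set.Iic (-t))).toReal)
      ≤ ∫ _t in Set.Ioc (0:ℝ) 1, (Real.sqrt 2 - 1) := by
        apply setIntegral_mono_on (hip.sub hiq) ((integrableOn_const_iff).mpr (Or.inr (by simp)))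
          measurableSet_Ioc
        intro t ht
        exact pointwise_aux μ hmed ht.1
    _ = Real.sqrt 2 - 1 := by
        rw [setIntegral_const]
        simp
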